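/- Let H be a semisimple Hopf algebra over an algebraically closed field K of characteristic zero. If χ ∈ H* is an irreducible character of H and η is an irreducible character of H*, regarded via the identification H** ≅ H as an element of H, then the value χ(η) lies in the n-th cyclotomic field Q(ζ_n) ⊂ K, where n is the exponent of H and ζ_n is a primitive n-th root of unity in K. -/

import Mathlib

open TensorProduct LinearMap Coalgebra

/-- The `m`-th Sweedler power `h ↦ h₍₁₎ h₍₂₎ ⋯ h₍ₘ₎`, where `h₍₁₎ ⊗ ⋯ ⊗ h₍ₘ₎` is the
iterated comultiplication: for `m = 0` it is `ε(h)1`, and inductively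
`h ↦ ∑ h₍₁₎ * ((m)-th power of h₍₂₎)`. -/
noncomputable def sweedlerPow (K H : Type*) [Field K] [Ring H] [HopfAlgebra K H] :
    ℕ → (H →ₗ[K] H)
  | 0 => Algebra.linearMap K H ∘ₗ Coalgebra.counit
  | n + 1 => LinearMap.mul' K H ∘ₗ (sweedlerPow K H n).lTensor H ∘ₗ Coalgebra.comul

/-- The action of an element `a : A` on an `A`-module `M` as a `K`-linear
endomorphism of `M` (whose trace is the value of the character of `M` at `a`). -/
def actionEnd (K : Type*) {A M : Type*} [CommSemiring K] [Semiring A] [AddCommMonoid M]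
    [Module K M] [Module A M] [SMulCommClass K A M] (a : A) : M →ₗ[K] M where
  toFun m := a • m
  map_add' := smul_add a
  map_smul' k m := (smul_comm k a m).symm

open Polynomial in
lemma trace_mem_adjoin_of_pow_eq_one {K : Type*} [Field K] [IsAlgClosed K] [CharZero K]
    {M : Type*} [AddCommGroup M] [Module K M] [FiniteDimensional K M]
    (f : Module.End K M) {n : ℕ} (hpos : 0 < n) (hf : f ^ n = 1)
    {ζ : K} (hζ : IsPrimitiveRoot ζ n) :
    LinearMap.trace K M f ∈ Algebra.adjoin ℚ {ζ} := by
  classical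
  set b := Module.finBasis K M with hb
  set A := LinearMap.toMatrixAlgEquiv b f with hA
  have hAn : A ^ n = 1 := by rw [hA, ← map_pow, hf, map_one]
  have htr : LinearMap.trace K M f = A.trace := LinearMap.trace_eq_matrix_trace K b f
  rw [htr, Matrix.trace_eq_sum_roots_charpoly]
  refine multiset_sum_mem _ fun μ hμ => ?_
  have hre : (Matrix.charpoly A).IsRoot μ := isRoot_of_mem_roots hμ
  have hdet : (μ • (1 : Matrix _ _ K) - A).det = 0 := by
    have h1 : (Matrix.charmatrix A).map (Polynomial.evalRingHom μ) =
        μ • (1 : Matrix _ _ K) - A := by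
      ext i j
      by_cases h : i = j
      · subst h
        simp [Matrix.charmatrix_apply_eq]
      · simp [Matrix.charmatrix_apply_ne _ _ _ h, Matrix.one_apply_ne h]
    calc (μ • (1 : Matrix _ _ K) - A).det
        = ((Matrix.charmatrix A).map (Polynomial.evalRingHom μ)).det := by rw [h1]
      _ = Polynomial.eval μ (Matrix.charmatrix A).det := by
          simpa [RingHom.mapMatrix_apply] using
            (RingHom.map_det (Polynomial.evalRingHom μ) (Matrix.charmatrix A)).symm
      _ = 0 := hre
  obtain ⟨v, hv0, hv⟩ := (Matrix.exists_mulVec_eq_zero_iff).mpr hdet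
  have hAv : A.mulVec v = μ • v := by
    rw [Matrix.sub_mulVec, sub_eq_zero] at hv
    rw [← hv, Matrix.smul_mulVec, Matrix.one_mulVec]
  have hpow : ∀ m : ℕ, (A ^ m).mulVec v = μ ^ m • v := by
    intro m
    induction m with
    | zero => simp [Matrix.one_mulVec]
    | succ m ih =>
        rw [pow_succ', ← Matrix.mulVec_mulVec, ih, Matrix.mulVec_smul, hAv,
          smul_smul, ← pow_succ]
  have hμn : μ ^ n = 1 := by
    have h1 : μ ^ n • v = v := by rw [← hpow, hAn, Matrix.one_mulVec]
    obtain ⟨i, hi⟩ := Function.ne_iff.mp hv0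
    have := congrFun h1 i
    simp only [Pi.smul_apply, smul_eq_mul] at this
    have h2 : (μ ^ n) * v i = 1 * v i := by rw [this, one_mul]
    exact mul_right_cancel₀ hi h2
  haveI : NeZero n := ⟨hpos.ne'⟩
  obtain ⟨i, _, hi⟩ := hζ.eq_pow_of_pow_eq_one hμn
  rw [← hi]
  exact pow_mem (Algebra.self_mem_adjoin_singleton ℚ ζ) i

/-- Let `H` be a semisimple Hopf algebra over an algebraically closed
field `K` of characteristic zero.  If `χ` is an irreducible character of `H` (the
trace character of a simple `H`-module `V`) and `η` is an irreducible character of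
`H*` (the trace character of a simple module `W` over the dual algebra `Hd ≅ H*`),
regarded via the identification `H** ≅ H` as an element of `H` (hypothesis `hη`),
then the value `χ(η)` lies in the `n`-th cyclotomic field `ℚ(ζₙ) ⊆ K`, where `n` is
the exponent of `H` and `ζₙ` is a primitive `n`-th root of unity of `K`. -/
theorem character_value_mem_cyclotomic_field
    {K H : Type*} [Field K] [IsAlgClosed K] [CharZero K]
    [Ring H] [HopfAlgebra K H] [FiniteDimensional K H] [IsSemisimpleRing H]
    -- the dual algebra `Hd ≅ H*`, with convolution product and unit the counit
    (Hd : Type*) [Ring Hd] [Algebra K Hd]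
    (Φ : Hd ≃ₗ[K] Module.Dual K H)
    (hΦone : Φ 1 = Coalgebra.counit)
    (hΦmul : ∀ a b : Hd, (Φ (a * b) : Module.Dual K H) =
      LinearMap.mul' K K ∘ₗ TensorProduct.map (Φ a) (Φ b) ∘ₗ Coalgebra.comul)
    -- a simple `H`-module `V`; its character is `χ = h ↦ trace of h on V`
    (V : Type*) [AddCommGroup V] [Module K V] [Module H V]
    [IsScalarTower K H V] [SMulCommClass K H V] [FiniteDimensional K V]
    [IsSimpleModule H V]
    -- a simple `Hd`-module `W`; its character, viewed in `H` via `H** ≅ H`, is `η`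
    (W : Type*) [AddCommGroup W] [Module K W] [Module Hd W]
    [IsScalarTower K Hd W] [SMulCommClass K Hd W] [FiniteDimensional K W]
    [IsSimpleModule Hd W]
    (η : H)
    (hη : ∀ a : Hd, Φ a η = LinearMap.trace K W (actionEnd K a))
    -- `n` is the exponent of `H`
    (n : ℕ)
    (hn : IsLeast {m : ℕ | 0 < m ∧
      sweedlerPow K H m = Algebra.linearMap K H ∘ₗ Coalgebra.counit} n)
    (ζ : K) (hζ : IsPrimitiveRoot ζ n) :
    LinearMap.trace K V (actionEnd K η) ∈ Algebra.adjoin ℚ {ζ} := by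
  classical
  haveI : SMulCommClass H K V := SMulCommClass.symm K H V
  haveI : SMulCommClass Hd K W := SMulCommClass.symm K Hd W
  set b : Module.Basis (Fin (Module.finrank K H)) K H := Module.finBasis K H with hbdef
  set f : Fin (Module.finrank K H) → Hd := fun i => Φ.symm (b.coord i) with hfdef
  have hΦf : ∀ i, Φ (f i) = b.coord i := fun i => Φ.apply_symm_apply _
  -- the injective comparison map `J : H ⊗ Hd → End K H`
  set J : H ⊗[K] Hd →ₗ[K] (H →ₗ[K] H) :=
    (dualTensorHomEquiv K H H).toLinearMap
      ∘ₗ (TensorProduct.comm K H (Module.Dual K H)).toLinearMap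
      ∘ₗ (LinearMap.lTensor H Φ.toLinearMap) with hJdef
  have hJapp : ∀ (a : H) (d : Hd) (h : H), J (a ⊗ₜ[K] d) h = Φ d h • a := by
    intro a d h
    simp [hJdef, dualTensorHomEquiv, dualTensorHomEquivOfBasis_apply]
  have hJinj : Function.Injective J := by
    rw [hJdef]
    refine (dualTensorHomEquiv K H H).injective.comp
      ((TensorProduct.comm K H (Module.Dual K H)).injective.comp ?_)
    have : LinearMap.lTensor H Φ.toLinearMap =
        (TensorProduct.congr (LinearEquiv.refl K H) Φ).toLinearMap := by
      apply TensorProduct.ext'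
      intro x y
      rfl
    rw [this]
    exact (TensorProduct.congr (LinearEquiv.refl K H) Φ).injective
  -- the canonical element
  set T : H ⊗[K] Hd := ∑ i, b i ⊗ₜ[K] f i with hTdef
  -- J intertwines multiplication by T with the Sweedler-power recursion
  have hJT : ∀ t : H ⊗[K] Hd,
      J (T * t) = LinearMap.mul' K H ∘ₗ (J t).lTensor H ∘ₗ Coalgebra.comul := by
    intro t
    induction t using TensorProduct.induction_on with
    | zero => simp
    | add x y hx hy =>
        simp only [mul_add, map_add, hx, hy, lTensor_add]
        rw [LinearMap.add_comp, LinearMap.comp_add]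
    | tmul a d =>
        have hTmul : T * (a ⊗ₜ[K] d) = ∑ i, (b i * a) ⊗ₜ[K] (f i * d) := by
          rw [hTdef, Finset.sum_mul]
          exact Finset.sum_congr rfl fun i _ => Algebra.TensorProduct.tmul_mul_tmul _ _ _ _
        rw [hTmul, map_sum]
        set L1 : H ⊗[K] H →ₗ[K] H :=
          ∑ i, LinearMap.smulRight
            (LinearMap.mul' K K ∘ₗ TensorProduct.map (b.coord i) (Φ d)) (b i * a) with hL1
        set L2 : H ⊗[K] H →ₗ[K] H :=
          LinearMap.mul' K H ∘ₗ LinearMap.lTensor H (J (a ⊗ₜ[K] d)) with hL2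
        have hL : L1 = L2 := by
          apply TensorProduct.ext'
          intro x y
          rw [hL1, hL2]
          simp only [LinearMap.sum_apply, LinearMap.smulRight_apply, LinearMap.comp_apply,
            TensorProduct.map_tmul, LinearMap.lTensor_tmul, LinearMap.mul'_apply, hJapp]
          calc ∑ i, (b.coord i x * Φ d y) • (b i * a)
              = ∑ i, (b.coord i x • b i) * (Φ d y • a) := by
                refine Finset.sum_congr rfl fun i _ => ?_
                rw [smul_mul_assoc, mul_smul_comm, smul_smul]
            _ = (∑ i, b.coord i x • b i) * (Φ d y • a) := by rw [Finset.sum_mul]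
            _ = x * (Φ d y • a) := by
                congr 1
                simpa using b.sum_repr x
        ext h
        have lhs : (∑ i, J ((b i * a) ⊗ₜ[K] (f i * d))) h = L1 (Coalgebra.comul h) := by
          rw [hL1]
          simp only [LinearMap.sum_apply, hJapp, LinearMap.smulRight_apply]
          refine Finset.sum_congr rfl fun i _ => ?_
          rw [hΦmul, hΦf]
          rfl
        rw [lhs, hL]
        rfl
  -- J of powers of T
  have hJpow : ∀ m : ℕ, J (T ^ m) = sweedlerPow K H m := by
    intro m
    induction m with
    | zero =>
        rw [pow_zero]
        rw [show (1 : H ⊗[K] Hd) = (1 : H) ⊗ₜ[K] (1 : Hd) from rfl]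
        ext h
        rw [hJapp, hΦone]
        show Coalgebra.counit h • (1 : H) = (Algebra.linearMap K H) (Coalgebra.counit h)
        rw [Algebra.linearMap_apply, Algebra.algebraMap_eq_smul_one]
    | succ m ih =>
        rw [pow_succ']
        rw [hJT, ih]
        rfl
  -- T^n = 1
  have hTn : T ^ n = 1 := by
    apply hJinj
    rw [hJpow, hn.1.2]
    have := hJpow 0
    rw [pow_zero] at this
    rw [this]
    rfl
  -- the representation of `H ⊗ Hd` on `V ⊗ W`
  set ρ : H ⊗[K] Hd →ₐ[K] Module.End K (V ⊗[K] W) :=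
    (Module.endTensorEndAlgHom (R := K) (S := K) (A := K) (M := V) (N := W)).comp
      (Algebra.TensorProduct.map (Algebra.lsmul K K V : H →ₐ[K] Module.End K V)
        (Algebra.lsmul K K W : Hd →ₐ[K] Module.End K W)) with hρdef
  have hRn : (ρ T) ^ n = 1 := by rw [← map_pow, hTn, map_one]
  have key := trace_mem_adjoin_of_pow_eq_one (ρ T) hn.1.1 hRn hζ
  have hρtmul : ∀ (a : H) (d : Hd), ρ (a ⊗ₜ[K] d)
      = TensorProduct.map (actionEnd K a) (actionEnd K d) := by
    intro a d
    rw [hρdef]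
    apply TensorProduct.ext'
    intro v w
    rfl
  set χ : H →ₗ[K] K :=
    (LinearMap.trace K V) ∘ₗ (Algebra.lsmul K K V : H →ₐ[K] Module.End K V).toLinearMap
    with hχdef
  have hχ : ∀ h : H, LinearMap.trace K V (actionEnd K h) = χ h := fun h => rfl
  have htrace : LinearMap.trace K (V ⊗[K] W) (ρ T) = LinearMap.trace K V (actionEnd K η) := by
    rw [hTdef, map_sum, map_sum]
    have step : ∀ i, LinearMap.trace K (V ⊗[K] W) (ρ (b i ⊗ₜ[K] f i))
        = LinearMap.trace K V (actionEnd K (b i)) * (b.coord i η) := by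
      intro i
      rw [hρtmul, LinearMap.trace_tensorProduct', ← hη, hΦf]
    rw [Finset.sum_congr rfl fun i _ => step i]
    calc ∑ i, LinearMap.trace K V (actionEnd K (b i)) * b.coord i η
        = ∑ i, χ (b.coord i η • b i) := by
          refine Finset.sum_congr rfl fun i _ => ?_
          rw [map_smul, smul_eq_mul, mul_comm, hχ]
      _ = χ (∑ i, b.coord i η • b i) := (map_sum χ _ _).symm
      _ = LinearMap.trace K V (actionEnd K η) := by
          rw [show (∑ i, b.coord i η • b i) = η by simpa using b.sum_repr η]
          exact (hχ η).symm
  rw [← htrace]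
  exact key
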